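/- Let 𝒜 = (Q, I, T, F, γ) be a multi-weighted automaton over Σ and valuation structure (M, Val, Φ), and let 𝒜′ = (Q, I, T, F, γ′) be the weighted automaton over the pv-monoid ℕ⟨M⟩ with γ′(t) = [γ(t)] for all t ∈ T. Then for all w ∈ Σ⁺, the ℕ⟨M⟩-behavior of 𝒜′ on w equals the multiset |𝒜|(w) of path weights of 𝒜 on w. -/

import Mathlib

/-- The finsupp over `List M` collecting, for each sequence `(m₁, …, mₙ)`, the product
`Π rᵢ(mᵢ)` of multiplicities. -/
noncomputable def listProd {M : Type*} : List (M →₀ ℕ) → (List M →₀ ℕ)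
  | [] => Finsupp.single [] 1
  | r :: rs => r.sum fun m k => (listProd rs).sum fun l j => Finsupp.single (m :: l) (k * j)

/-- The extension of a valuation function `Val : M⁺ → M` to finite multisets:
`Val(r₁, …, rₙ)(m) = Σ { Π rᵢ(mᵢ) | Val(m₁, …, mₙ) = m }`. -/
noncomputable def mval {M : Type*} (Val : List M → M) (rs : List (M →₀ ℕ)) : M →₀ ℕ :=
  (listProd rs).mapDomain Val

/-- Accepting paths of a nondeterministic automaton `(Q, I, T, F)` on a finite word
`w = a₀ ⋯ aₙ`, represented as state sequences `qs : Fin (|w|+1) → Q` starting in `I`,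
ending in `F`, and following transitions in `T`. -/
def accSet {Q A : Type*} (I F : Set Q) (T : Set (Q × A × Q)) (w : List A) :
    Set (Fin (w.length + 1) → Q) :=
  {qs | qs 0 ∈ I ∧ qs (Fin.last w.length) ∈ F ∧
    ∀ i : Fin w.length, (qs i.castSucc, w.get i, qs i.succ) ∈ T}

/-- The behavior of a weighted automaton over the pv-monoid of finite multisets:
the multiset union (sum) over all accepting paths of the multiset valuation of the
sequence of transition weights. -/
noncomputable def wBehavior {Q A M : Type*} (Val : List M → M) (I F : Set Q)
    (T : Set (Q × A × Q)) (γ : Q × A × Q → (M →₀ ℕ)) (w : List A) : M →₀ ℕ :=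
  ∑ᶠ qs ∈ accSet I F T w,
    mval Val (List.ofFn fun i : Fin w.length => γ (qs i.castSucc, w.get i, qs i.succ))

/-- The weight of a path of a multi-weighted automaton. -/
def pathWeight {Q A M : Type*} (Val : List M → M) (γ : Q × A × Q → M) (w : List A)
    (qs : Fin (w.length + 1) → Q) : M :=
  Val (List.ofFn fun i : Fin w.length => γ (qs i.castSucc, w.get i, qs i.succ))

/-- The multiset `|𝒜|(w)` of weights of accepting paths of a multi-weighted automaton:
the union over accepting paths of the simple multiset on the path weight. -/
noncomputable def msBehavior {Q A M : Type*} (Val : List M → M) (I F : Set Q)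
    (T : Set (Q × A × Q)) (γ : Q × A × Q → M) (w : List A) : M →₀ ℕ :=
  ∑ᶠ qs ∈ accSet I F T w, Finsupp.single (pathWeight Val γ w qs) 1

/-- Let `𝒜 = (Q, I, T, F, γ)` be a multi-weighted automaton and `𝒜′ = (Q, I, T, F, γ′)`
the weighted automaton over the pv-monoid `ℕ⟨M⟩` with `γ′(t) = [γ(t)]`. Then for all
`w ∈ Σ⁺`, the `ℕ⟨M⟩`-behavior of `𝒜′` on `w` equals the multiset `|𝒜|(w)`. -/
lemma listProd_single {M : Type*} (ms : List M) :
    listProd (ms.map fun m => Finsupp.single m 1) = Finsupp.single ms 1 := by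
  induction ms with
  | nil => rfl
  | cons m ms ih =>
    simp only [List.map_cons, listProd, ih]
    rw [Finsupp.sum_single_index, Finsupp.sum_single_index]
    · simp
    · simp [Finsupp.sum_single_index]

lemma mval_single {M : Type*} (Val : List M → M) (ms : List M) :
    mval Val (ms.map fun m => Finsupp.single m 1) = Finsupp.single (Val ms) 1 := by
  rw [mval, listProd_single, Finsupp.mapDomain_single]

theorem single_weights_behavior {Q A M : Type*} [Fintype Q]
    (Val : List M → M) (I F : Set Q) (T : Set (Q × A × Q)) (γ : Q × A × Q → M)
    (w : List A) (hw : w ≠ []) :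
    wBehavior Val I F T (fun t => Finsupp.single (γ t) 1) w =
      msBehavior Val I F T γ w := by
  unfold wBehavior msBehavior
  apply finsum_mem_congr rfl
  intro qs _
  have h : (List.ofFn fun i : Fin w.length =>
        Finsupp.single (γ (qs i.castSucc, w.get i, qs i.succ)) 1)
      = (List.ofFn fun i : Fin w.length => γ (qs i.castSucc, w.get i, qs i.succ)).map
          (fun m => Finsupp.single m 1) := (List.map_ofFn (f := fun i : Fin w.length => γ (qs i.castSucc, w.get i, qs i.succ)) (g := fun m => Finsupp.single m 1)).symm
  rw [h, mval_single]
  rfl
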